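/- For the split graph SP^t with t vertices in the pendant independent part (n = t + 5 vertices total), the quotient matrix Q = [[1,2t,1,1,2],[4,2(t−1),1,2,2],[2,t,0,1,1],[2,2t,1,0,1],[4,2t,1,1,0]] has characteristic polynomial f(λ) = λ⁵ − (2t−1)λ⁴ − (15t+17)λ³ − (33t+49)λ² − (23t+44)λ − 5t − 12, and for all sufficiently large t its second largest real root lies strictly between −(t+1)/(2t) and −1/2. -/

import Mathlib

set_option maxHeartbeats 1000000 in
theorem SP_charpoly_eval (t : ℝ) (x : ℝ) :
      (Matrix.charpoly
        (!![1, 2 * (t : ℝ), 1, 1, 2;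
            4, 2 * ((t : ℝ) - 1), 1, 2, 2;
            2, (t : ℝ), 0, 1, 1;
            2, 2 * (t : ℝ), 1, 0, 1;
            4, 2 * (t : ℝ), 1, 1, 0] : Matrix (Fin 5) (Fin 5) ℝ)).eval x =
        x ^ 5 - (2 * (t : ℝ) - 1) * x ^ 4 - (15 * (t : ℝ) + 17) * x ^ 3
          - (33 * (t : ℝ) + 49) * x ^ 2 - (23 * (t : ℝ) + 44) * x
          - 5 * (t : ℝ) - 12 := by
  rw [Matrix.charpoly, ← Polynomial.coe_evalRingHom, RingHom.map_det]
  have h : (Matrix.charmatrix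
        (!![1, 2 * (t : ℝ), 1, 1, 2;
            4, 2 * ((t : ℝ) - 1), 1, 2, 2;
            2, (t : ℝ), 0, 1, 1;
            2, 2 * (t : ℝ), 1, 0, 1;
            4, 2 * (t : ℝ), 1, 1, 0] : Matrix (Fin 5) (Fin 5) ℝ)).map (Polynomial.evalRingHom x) =
      !![x - 1, -(2*t), -1, -1, -2;
         -4, x - 2*(t-1), -1, -2, -2;
         -2, -t, x, -1, -1;
         -2, -(2*t), -1, x, -1;
         -4, -(2*t), -1, -1, x] := by
    ext i j
    fin_cases i <;> fin_cases j <;>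
      simp [Matrix.charmatrix_apply, Matrix.diagonal] <;> rfl
  rw [show ((Polynomial.evalRingHom x).mapMatrix _ : Matrix (Fin 5) (Fin 5) ℝ).det
      = ((Matrix.charmatrix _).map (Polynomial.evalRingHom x)).det from rfl, h]
  simp [Matrix.det_succ_row_zero, Fin.sum_univ_succ, Fin.succAbove]
  ring

set_option maxHeartbeats 1000000 in
theorem SP_aux_main (u : ℝ) (hu : (150:ℝ) ≤ u) :
    ∃ x y : ℝ,
      x ^ 5 - (2 * u - 1) * x ^ 4 - (15 * u + 17) * x ^ 3
        - (33 * u + 49) * x ^ 2 - (23 * u + 44) * x - 5 * u - 12 = 0 ∧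
      y ^ 5 - (2 * u - 1) * y ^ 4 - (15 * u + 17) * y ^ 3
        - (33 * u + 49) * y ^ 2 - (23 * u + 44) * y - 5 * u - 12 = 0 ∧
      x < y ∧
      (∀ z : ℝ,
        z ^ 5 - (2 * u - 1) * z ^ 4 - (15 * u + 17) * z ^ 3
          - (33 * u + 49) * z ^ 2 - (23 * u + 44) * z - 5 * u - 12 = 0 → z ≤ x ∨ z = y) ∧
      -(u + 1) / (2 * u) < x ∧ x < -1/2 := by
  have hu0 : (0:ℝ) < u := by linarith
  set f : ℝ → ℝ := fun z => z ^ 5 - (2 * u - 1) * z ^ 4 - (15 * u + 17) * z ^ 3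
      - (33 * u + 49) * z ^ 2 - (23 * u + 44) * z - 5 * u - 12 with hf
  have hcont : Continuous f := by fun_prop
  set a : ℝ := -(u + 1) / (2 * u) with ha
  set b : ℝ := -(1/2 : ℝ) with hb
  -- f a > 0
  have hfa : 0 < f a := by
    have key : (2*u)^5 * f a = u^5 + 19*u^4 - 142*u^3 + 62*u^2 - 3*u - 1 := by
      simp only [hf, ha]
      field_simp
      ring
    have hpos : 0 < u^5 + 19*u^4 - 142*u^3 + 62*u^2 - 3*u - 1 := by
      nlinarith [mul_nonneg (mul_nonneg (mul_nonneg (by linarith : (0:ℝ) ≤ u) (by linarith : (0:ℝ) ≤ u)) (by linarith : (0:ℝ) ≤ u)) (by linarith : (0:ℝ) ≤ u - 150),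
        mul_nonneg (by linarith : (0:ℝ) ≤ u) (by linarith : (0:ℝ) ≤ u - 150),
        mul_pos hu0 hu0]
    have h2 : (0:ℝ) < (2*u)^5 := by positivity
    nlinarith [key, hpos, h2]
  -- f b = -3/32
  have hfb : f b = -3/32 := by simp only [hf, hb]; ring
  -- f negative on [-1/2, 2u]
  have hneg : ∀ z : ℝ, -(1/2:ℝ) ≤ z → z ≤ 2*u → f z < 0 := by
    intro z h1 h2
    rcases le_total z 0 with h0 | h0
    · have hq : (0:ℝ) ≤ -(z^4-17*z^2-32*z-12) - 3/16 := by
        nlinarith [mul_nonneg (by linarith : (0:ℝ) ≤ z + 1/2)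
          (by nlinarith [sq_nonneg z] : (0:ℝ) ≤ -(z^3 - z^2/2 - (67/4)*z - 135/8))]
      simp only [hf]
      nlinarith [mul_nonneg (mul_nonneg (by linarith : (0:ℝ) ≤ u) (by linarith : (0:ℝ) ≤ 2*z+1))
          (by nlinarith [sq_nonneg z] : (0:ℝ) ≤ z^3+7*z^2+13*z+5),
        mul_nonneg (by linarith : (0:ℝ) ≤ z+1) hq]
    · simp only [hf]
      nlinarith [mul_nonneg (mul_nonneg (mul_nonneg (mul_nonneg h0 h0) h0) h0) (by linarith : (0:ℝ) ≤ 2*u - z),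
        mul_nonneg (mul_nonneg (mul_nonneg h0 h0) h0) (by linarith : (0:ℝ) ≤ 2*u - z),
        mul_nonneg (mul_nonneg h0 h0) h0, mul_nonneg h0 h0]
  -- f positive on [3u, ∞)
  have hpos3 : ∀ z : ℝ, 3*u ≤ z → 0 < f z := by
    intro z h1
    have hz : (450:ℝ) ≤ z := by linarith
    have hz3 : (0:ℝ) ≤ z^3 := by positivity
    have hz4 : (0:ℝ) ≤ z^4 := by positivity
    simp only [hf]
    nlinarith [mul_nonneg hz4 (by linarith : (0:ℝ) ≤ z - 3*u),
      mul_nonneg (mul_nonneg (by linarith : (0:ℝ) ≤ u) hz3) (by linarith : (0:ℝ) ≤ z - 3*u),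
      mul_nonneg (mul_nonneg (by linarith : (0:ℝ) ≤ u - 150) (by linarith : (0:ℝ) ≤ u)) hz3,
      mul_nonneg (mul_nonneg (by linarith : (0:ℝ) ≤ u) (by linarith : (0:ℝ) ≤ z - 450)) (by nlinarith : (0:ℝ) ≤ z^2),
      mul_nonneg (mul_nonneg (by linarith : (0:ℝ) ≤ u) (by linarith : (0:ℝ) ≤ z - 450)) (by linarith : (0:ℝ) ≤ z),
      mul_nonneg (by linarith : (0:ℝ) ≤ u) (by linarith : (0:ℝ) ≤ z)]
  have hab : a < b := by
    simp only [ha, hb]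
    rw [div_lt_iff₀ (by positivity : (0:ℝ) < 2*u)]
    linarith
  -- the set of roots in [a, b]
  set S : Set ℝ := {z : ℝ | f z = 0} ∩ Set.Icc a b with hS
  have hSclosed : IsClosed ({z : ℝ | f z = 0}) := isClosed_eq hcont continuous_const
  have hScpt : IsCompact S := isCompact_Icc.inter_left hSclosed
  have hSne : S.Nonempty := by
    have h0 : (0:ℝ) ∈ Set.Ioo (f b) (f a) := by
      constructor
      · rw [hfb]; norm_num
      · exact hfa
    have := intermediate_value_Ioo' hab.le hcont.continuousOn h0
    obtain ⟨r, hr, hr0⟩ := this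
    exact ⟨r, hr0, Set.Ioo_subset_Icc_self hr⟩
  set x : ℝ := sSup S with hx
  have hxS : x ∈ S := hScpt.sSup_mem hSne
  have hx0 : f x = 0 := hxS.1
  have hxIcc : x ∈ Set.Icc a b := hxS.2
  have hxb : x < b := lt_of_le_of_ne hxIcc.2 (by
    intro h; rw [h] at hx0; rw [hfb] at hx0; norm_num at hx0)
  have hax : a < x := lt_of_le_of_ne hxIcc.1 (by
    intro h; rw [← h] at hx0; rw [hx0] at hfa; norm_num at hfa)
  -- the large root y
  have hf2u : f (2*u) < 0 := hneg (2*u) (by linarith) le_rfl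
  have hf3u : 0 < f (3*u) := hpos3 (3*u) le_rfl
  have hyex := intermediate_value_Ioo (by linarith : 2*u ≤ 3*u) hcont.continuousOn
    (Set.mem_Ioo.mpr ⟨hf2u, hf3u⟩)
  obtain ⟨y, hyIoo, hy0⟩ := hyex
  -- strict monotonicity on [2u, 3u]
  have hd : ∀ z : ℝ, HasDerivAt f
      (5*z^4 - (2*u-1)*(4*z^3) - (15*u+17)*(3*z^2) - (33*u+49)*(2*z) - (23*u+44)) z := by
    intro z
    have h1 : HasDerivAt (fun w : ℝ => w^5) (5*z^4) z := by simpa using hasDerivAt_pow 5 z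
    have h2 : HasDerivAt (fun w : ℝ => (2*u-1)*w^4) ((2*u-1)*(4*z^3)) z := by
      simpa using (hasDerivAt_pow 4 z).const_mul (2*u-1)
    have h3 : HasDerivAt (fun w : ℝ => (15*u+17)*w^3) ((15*u+17)*(3*z^2)) z := by
      simpa using (hasDerivAt_pow 3 z).const_mul (15*u+17)
    have h4 : HasDerivAt (fun w : ℝ => (33*u+49)*w^2) ((33*u+49)*(2*z)) z := by
      simpa using (hasDerivAt_pow 2 z).const_mul (33*u+49)
    have h5 : HasDerivAt (fun w : ℝ => (23*u+44)*w) ((23*u+44)) z := by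
      simpa using (hasDerivAt_id z).const_mul (23*u+44)
    exact (((((h1.sub h2).sub h3).sub h4).sub h5).sub_const (5*u)).sub_const 12
  have hmono : StrictMonoOn f (Set.Icc (2*u) (3*u)) := by
    apply strictMonoOn_of_deriv_pos (convex_Icc _ _) hcont.continuousOn
    intro z hz
    rw [interior_Icc] at hz
    rw [(hd z).deriv]
    have h1 : 2*u < z := hz.1
    nlinarith [mul_nonneg (mul_nonneg (mul_nonneg (by linarith : (0:ℝ) ≤ z) (by linarith : (0:ℝ) ≤ z)) (by linarith : (0:ℝ) ≤ z)) (by linarith : (0:ℝ) ≤ z - 2*u),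
      mul_pos (mul_pos hu0 (by linarith : (0:ℝ) < z)) (by linarith : (0:ℝ) < z),
      mul_pos hu0 (by linarith : (0:ℝ) < z),
      mul_pos hu0 hu0]
  refine ⟨x, y, hx0, hy0, ?_, ?_, hax, by rw [hb] at hxb; linarith⟩
  · calc x < b := hxb
      _ ≤ 2*u := by simp only [hb]; linarith
      _ < y := hyIoo.1
  · intro z hz
    rcases le_or_gt z x with h | h
    · exact Or.inl h
    · right
      have hzb : b < z := by
        by_contra h'
        push_neg at h'
        have hzS : z ∈ S := ⟨hz, Set.mem_Icc.mpr ⟨by linarith, h'⟩⟩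
        exact absurd (le_csSup hScpt.bddAbove hzS) (not_le.mpr h)
      have hz2u : 2*u < z := by
        by_contra h'
        push_neg at h'
        have := hneg z (by simp only [hb] at hzb; linarith) h'
        simp only [hf] at this
        linarith
      have hz3u : z < 3*u := by
        by_contra h'
        push_neg at h'
        have := hpos3 z h'
        simp only [hf] at this
        linarith
      exact hmono.injOn (Set.mem_Icc.mpr ⟨hz2u.le, hz3u.le⟩)
        (Set.mem_Icc.mpr ⟨hyIoo.1.le, hyIoo.2.le⟩) (by simp only [hf] at hy0 ⊢; rw [hz, hy0])

theorem charpoly_and_second_root_SP_quotient :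
    (∀ t : ℕ, ∀ x : ℝ,
      (Matrix.charpoly
        (!![1, 2 * (t : ℝ), 1, 1, 2;
            4, 2 * ((t : ℝ) - 1), 1, 2, 2;
            2, (t : ℝ), 0, 1, 1;
            2, 2 * (t : ℝ), 1, 0, 1;
            4, 2 * (t : ℝ), 1, 1, 0] : Matrix (Fin 5) (Fin 5) ℝ)).eval x =
        x ^ 5 - (2 * (t : ℝ) - 1) * x ^ 4 - (15 * (t : ℝ) + 17) * x ^ 3
          - (33 * (t : ℝ) + 49) * x ^ 2 - (23 * (t : ℝ) + 44) * x
          - 5 * (t : ℝ) - 12) ∧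
    (∃ T : ℕ, ∀ t : ℕ, T ≤ t →
      ∃ x y : ℝ,
        x ^ 5 - (2 * (t : ℝ) - 1) * x ^ 4 - (15 * (t : ℝ) + 17) * x ^ 3
          - (33 * (t : ℝ) + 49) * x ^ 2 - (23 * (t : ℝ) + 44) * x
          - 5 * (t : ℝ) - 12 = 0 ∧
        y ^ 5 - (2 * (t : ℝ) - 1) * y ^ 4 - (15 * (t : ℝ) + 17) * y ^ 3
          - (33 * (t : ℝ) + 49) * y ^ 2 - (23 * (t : ℝ) + 44) * y
          - 5 * (t : ℝ) - 12 = 0 ∧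
        x < y ∧
        (∀ z : ℝ,
          z ^ 5 - (2 * (t : ℝ) - 1) * z ^ 4 - (15 * (t : ℝ) + 17) * z ^ 3
            - (33 * (t : ℝ) + 49) * z ^ 2 - (23 * (t : ℝ) + 44) * z
            - 5 * (t : ℝ) - 12 = 0 → z ≤ x ∨ z = y) ∧
        -((t : ℝ) + 1) / (2 * (t : ℝ)) < x ∧ x < -1/2) := by
  constructor
  · exact fun t x => SP_charpoly_eval (t : ℝ) x
  · exact ⟨150, fun t ht => SP_aux_main (t : ℝ) (by exact_mod_cast ht)⟩
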